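/- Every Virasoro module that is free of rank 1 over ℂ[d_0] (with d_0 acting by multiplication) is isomorphic to Ω(λ, a) for some λ ∈ ℂ*, a ∈ ℂ; in particular the central element C acts as 0 on such a module. -/

import Mathlib

open Polynomial

/-- shift-coefficient lemma -/
lemma VirAux.shift_coeff (Q : Polynomial ℂ) (n : ℕ) (hQ : Q.natDegree ≤ n + 1) (s : ℂ) :
    (Q.comp (X - C s)).coeff n = Q.coeff n - s * (n+1) * Q.coeff (n+1) := by
  have h1 : Q.comp (X - C s) = taylor (-s) Q := by
    rw [taylor_apply, map_neg, sub_eq_add_neg]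
  rw [h1, taylor_coeff]
  have h2 : hasseDeriv n Q
      = Polynomial.C (Q.coeff n) + Polynomial.C ((n+1 : ℂ) * Q.coeff (n+1)) * X := by
    ext j
    rw [hasseDeriv_coeff]
    match j with
    | 0 => simp
    | 1 =>
      simp only [coeff_add, coeff_C, coeff_C_mul, coeff_X_one, mul_one]
      rw [show 1 + n = n + 1 by omega, Nat.choose_succ_self_right]
      push_cast; simp
    | (j+2) =>
      have : Q.coeff (j + 2 + n) = 0 := by
        apply coeff_eq_zero_of_natDegree_lt; omega
      simp only [this, mul_zero, coeff_add, coeff_C, coeff_C_mul]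
      rw [coeff_X]
      simp
  rw [h2]
  simp
  ring

lemma VirAux.shift_coeff_top (Q : Polynomial ℂ) (n : ℕ) (hQ : Q.natDegree ≤ n) (s : ℂ) :
    (Q.comp (X - C s)).coeff n = Q.coeff n := by
  have hz : Q.coeff (n+1) = 0 := coeff_eq_zero_of_natDegree_lt (by omega)
  rw [VirAux.shift_coeff Q n (hQ.trans (by omega)) s, hz, mul_zero, sub_zero]

lemma VirAux.coeff_mul_sub (A B : Polynomial ℂ) (a b : ℕ) (hA : A.natDegree ≤ a + 1)
    (hB : B.natDegree ≤ b + 1) :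
    (A * B).coeff (a + b + 1) = A.coeff a * B.coeff (b+1) + A.coeff (a+1) * B.coeff b := by
  rw [coeff_mul]
  rw [show (A.coeff a * B.coeff (b+1) + A.coeff (a+1) * B.coeff b : ℂ)
      = ∑ x ∈ ({(a, b+1), (a+1, b)} : Finset (ℕ × ℕ)), A.coeff x.1 * B.coeff x.2 by
    rw [Finset.sum_insert (by simp), Finset.sum_singleton]]
  apply (Finset.sum_subset _ _).symm
  · intro x hx
    simp only [Finset.mem_insert, Finset.mem_singleton] at hx
    rcases hx with h|h <;> subst h <;> simp [Finset.mem_antidiagonal] <;> omega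
  · intro x hx hnx
    simp only [Finset.HasAntidiagonal.mem_antidiagonal] at hx
    simp only [Finset.mem_insert, Finset.mem_singleton] at hnx
    have : a + 1 < x.1 ∨ b + 1 < x.2 := by
      rcases x with ⟨u,v⟩; simp at hnx ⊢
      omega
    rcases this with h|h
    · rw [coeff_eq_zero_of_natDegree_lt (lt_of_le_of_lt hA h), zero_mul]
    · rw [coeff_eq_zero_of_natDegree_lt (lt_of_le_of_lt hB h), mul_zero]

lemma VirAux.natDeg_shift (Q : Polynomial ℂ) (s : ℂ) :
    (Q.comp (X - C s)).natDegree ≤ Q.natDegree := by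
  refine (natDegree_comp_le).trans ?_
  rw [natDegree_X_sub_C]; omega

lemma VirAux.T0 (P Q : Polynomial ℂ) (m n : ℕ) (s t : ℂ) (hP : P.natDegree ≤ m)
    (hQ : Q.natDegree ≤ n) :
    ((Q.comp (X - C s)) * P - (P.comp (X - C t)) * Q).coeff (n + m) = 0 := by
  rw [coeff_sub, coeff_mul_add_eq_of_natDegree_le ((VirAux.natDeg_shift Q s).trans hQ) hP,
    show n + m = m + n by omega,
    coeff_mul_add_eq_of_natDegree_le ((VirAux.natDeg_shift P t).trans hP) hQ,
    VirAux.shift_coeff_top Q n hQ s, VirAux.shift_coeff_top P m hP t]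
  ring

lemma VirAux.T1 (P Q : Polynomial ℂ) (m n : ℕ) (s t : ℂ) (hP : P.natDegree ≤ m + 1)
    (hQ : Q.natDegree ≤ n + 1) :
    ((Q.comp (X - C s)) * P - (P.comp (X - C t)) * Q).coeff (n + m + 1)
      = P.coeff (m+1) * Q.coeff (n+1) * (t*(m+1) - s*(n+1)) := by
  rw [coeff_sub, VirAux.coeff_mul_sub _ _ n m ((VirAux.natDeg_shift Q s).trans hQ) hP,
    show n + m + 1 = m + n + 1 by omega,
    VirAux.coeff_mul_sub _ _ m n ((VirAux.natDeg_shift P t).trans hP) hQ,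
    VirAux.shift_coeff Q n hQ s, VirAux.shift_coeff P m hP t,
    VirAux.shift_coeff_top Q (n+1) hQ s, VirAux.shift_coeff_top P (m+1) hP t]
  ring

lemma VirAux.lemU (γ γ' e : ℂ) (he : e ≠ 0) (hk : ∀ k : ℕ, γ' - γ - k * e ≠ 0)
    (h : Polynomial ℂ)
    (heq : (X + C γ') * h = (X + C γ) * (h.comp (X + C e))) : h = 0 := by
  have key : ∀ k : ℕ, h.eval (-γ - k * e) = 0 := by
    intro k
    induction k with
    | zero =>
      have := congrArg (Polynomial.eval (-γ)) heq
      simp only [eval_mul, eval_add, eval_X, eval_C, eval_comp] at this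
      have h0 := hk 0
      push_cast at h0
      have : (-γ + γ') * h.eval (-γ) = 0 := by
        rw [this]; ring
      rcases mul_eq_zero.1 this with h1|h1
      · exact absurd (by linear_combination h1) h0
      · simpa using h1
    | succ k ih =>
      push_cast
      have := congrArg (Polynomial.eval (-γ - (k+1) * e)) heq
      simp only [eval_mul, eval_add, eval_X, eval_C, eval_comp] at this
      have h2 : (-γ - (k+1)*e + γ') * h.eval (-γ - (k+1)*e)
          = (-γ - (k+1)*e + γ) * (h.eval (-γ - k*e)) := by
        rw [this]; ring_nf
      rw [ih, mul_zero] at h2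
      have h3 := hk (k+1)
      push_cast at h3
      have h4 : (-γ - (k+1)*e + γ') ≠ 0 := fun hc => h3 (by linear_combination hc)
      exact (mul_eq_zero.1 h2).resolve_left h4
  apply eq_zero_of_infinite_isRoot
  have hinj : Function.Injective (fun k : ℕ => -γ - k * e) := by
    intro k1 k2 hk12
    simp only at hk12
    have h5 : (k1 : ℂ) * e = k2 * e := by linear_combination -hk12
    have h6 : (k1 : ℂ) = k2 := mul_right_cancel₀ he h5
    exact_mod_cast h6
  exact Set.infinite_of_injective_forall_mem hinj key

lemma VirAux.unique (γ γ' e : ℂ) (he : e ≠ 0) (hk : ∀ k : ℕ, γ' - γ - k * e ≠ 0)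
    (G P R : Polynomial ℂ)
    (hG : (X + C γ') * G - (X + C γ) * (G.comp (X + C e)) = R)
    (hP : (X + C γ') * P - (X + C γ) * (P.comp (X + C e)) = R) : G = P := by
  have h := VirAux.lemU γ γ' e he hk (G - P) ?_
  · exact sub_eq_zero.1 h
  · rw [sub_comp]
    linear_combination hG - hP

/-- The action of `d_k` (`k ∈ ℤ`) on the Virasoro module `Ω(λ,a) = ℂ[x]`. -/
noncomputable def omegaAct (l a : ℂ) (k : ℤ) (f : Polynomial ℂ) : Polynomial ℂ :=
  l ^ k • ((X - C ((k : ℂ) * (a + 1))) * f.comp (X - C (k : ℂ)))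

/-- every Virasoro module free of rank 1 over `ℂ[d_0]` (with `d_0`
acting by multiplication) is isomorphic to `Ω(λ,a)`; in particular the central
element `C` acts as `0`. -/
theorem classification_virasoro
    (D : ℤ → Polynomial ℂ →ₗ[ℂ] Polynomial ℂ)
    (Cop : Polynomial ℂ →ₗ[ℂ] Polynomial ℂ)
    (h0 : ∀ f : Polynomial ℂ, D 0 f = X * f)
    (hC : ∀ (i : ℤ) (f : Polynomial ℂ), Cop (D i f) = D i (Cop f))
    (hbr : ∀ (i j : ℤ) (f : Polynomial ℂ),
      D i (D j f) - D j (D i f)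
        = ((j : ℂ) - (i : ℂ)) • D (i + j) f
          + (if i + j = 0 then ((i : ℂ) ^ 3 - (i : ℂ)) / 12 else 0) • Cop f) :
    ∃ (l a : ℂ), l ≠ 0 ∧ (∀ f : Polynomial ℂ, Cop f = 0) ∧
      ∃ φ : Polynomial ℂ ≃ₗ[ℂ] Polynomial ℂ,
        ∀ (i : ℤ) (f : Polynomial ℂ), φ (D i f) = omegaAct l a i (φ f) := by
  -- Phase 1 : twisted module structure
  have hX : ∀ (i : ℤ) (f : Polynomial ℂ), D i (X * f) = (X - C (i:ℂ)) * D i f := by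
    intro i f
    have h := hbr i 0 f
    have hz : (if i + 0 = 0 then ((i:ℂ)^3 - (i:ℂ))/12 else 0) • Cop f = 0 := by
      by_cases hi : i = 0 <;> simp [hi]
    rw [hz, add_zero, h0, h0, add_zero] at h
    push_cast at h
    rw [smul_eq_C_mul, zero_sub, map_neg] at h
    linear_combination h
  have hmul : ∀ (i : ℤ) (p f : Polynomial ℂ),
      D i (p * f) = p.comp (X - C (i:ℂ)) * D i f := by
    intro i p
    induction p using Polynomial.induction_on with
    | C a =>
      intro f
      rw [← smul_eq_C_mul, map_smul, C_comp, smul_eq_C_mul]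
    | add p q hp hq =>
      intro f
      rw [add_mul, map_add, hp, hq, add_comp, add_mul]
    | monomial n a ih =>
      intro f
      have e1 : C a * X^(n+1) * f = X * (C a * X^n * f) := by ring
      rw [e1, hX, ih]
      simp only [mul_comp, C_comp, X_comp, pow_comp]
      ring
  set g : ℤ → Polynomial ℂ := fun i => D i 1 with hgdef
  have hD : ∀ (i : ℤ) (f : Polynomial ℂ), D i f = f.comp (X - C (i:ℂ)) * g i := by
    intro i f
    have := hmul i f 1
    rwa [mul_one] at this
  have hg0 : g 0 = X := by
    simp only [hgdef]
    rw [h0, mul_one]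
  have hCmul : ∀ (p f : Polynomial ℂ), Cop (p * f) = p * Cop f := by
    intro p
    induction p using Polynomial.induction_on with
    | C a =>
      intro f
      rw [← smul_eq_C_mul, map_smul, smul_eq_C_mul]
    | add p q hp hq =>
      intro f
      rw [add_mul, map_add, hp, hq, add_mul]
    | monomial n a ih =>
      intro f
      have hCX : ∀ f : Polynomial ℂ, Cop (X * f) = X * Cop f := by
        intro f
        have := hC 0 f
        rwa [h0, h0] at this
      have e1 : C a * X^(n+1) * f = X * (C a * X^n * f) := by ring
      rw [e1, hCX, ih]
      ring
  set c : Polynomial ℂ := Cop 1 with hcdef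
  have hCop : ∀ f : Polynomial ℂ, Cop f = f * c := by
    intro f
    have := hCmul f 1
    rwa [mul_one] at this
  have E : ∀ i j : ℤ, (g j).comp (X - C (i:ℂ)) * g i - (g i).comp (X - C (j:ℂ)) * g j
      = ((j:ℂ) - (i:ℂ)) • g (i+j)
        + (if i + j = 0 then ((i:ℂ)^3 - (i:ℂ))/12 else 0) • c := by
    intro i j
    have h := hbr i j 1
    rw [hD i (D j 1), hD j (D i 1)] at h
    exact h
  -- Phase 2 : the fundamental equation between g 1 and g (-1)
  have E1 : (g (-1)).comp (X - C 1) * g 1 - (g 1).comp (X - C (-1)) * g (-1)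
      = C (-2) * X := by
    have h := E 1 (-1)
    rw [show (1:ℤ) + (-1) = 0 by norm_num, if_pos rfl, hg0] at h
    rw [show ((1:ℤ):ℂ) = 1 by norm_num, show ((-1:ℤ):ℂ) = -1 by norm_num] at h
    rw [show (((-1):ℂ) - 1) = -2 by norm_num, show (((1:ℂ))^3 - 1)/12 = 0 by norm_num] at h
    rw [zero_smul, add_zero, smul_eq_C_mul] at h
    exact h
  have hCXne : (C (-2) * X : Polynomial ℂ) ≠ 0 := by
    intro h
    have := congrArg (fun p => Polynomial.coeff p 1) h
    simp at this
  have hg1ne : g 1 ≠ 0 := by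
    intro h
    rw [h, zero_comp, zero_mul, mul_zero, sub_zero] at E1
    exact hCXne E1.symm
  have hgm1ne : g (-1) ≠ 0 := by
    intro h
    rw [h, zero_comp, zero_mul, mul_zero] at E1
    exact hCXne (by rw [← E1]; ring)
  have ha : (g 1).coeff (g 1).natDegree ≠ 0 := by
    rw [coeff_natDegree]; exact leadingCoeff_ne_zero.mpr hg1ne
  have hb : (g (-1)).coeff (g (-1)).natDegree ≠ 0 := by
    rw [coeff_natDegree]; exact leadingCoeff_ne_zero.mpr hgm1ne
  have hmn2 : (g 1).natDegree + (g (-1)).natDegree = 2 := by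
    by_contra hne
    rcases Nat.lt_or_ge ((g 1).natDegree + (g (-1)).natDegree) 2 with hlt | hge
    · rcases Nat.eq_zero_or_pos (g (-1)).natDegree with hz0 | hz1
      · have h := VirAux.T0 (g 1) (g (-1)) 1 0 1 (-1) (by omega) (by omega)
        rw [E1] at h
        simp [coeff_C_mul] at h
      · have h := VirAux.T0 (g 1) (g (-1)) 0 1 1 (-1) (by omega) (by omega)
        rw [E1] at h
        simp [coeff_C_mul] at h
    · rcases Nat.eq_zero_or_pos (g 1).natDegree with hm0 | hm1
      · -- g 1 constant, deg g (-1) ≥ 3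
        obtain ⟨n', hn'⟩ : ∃ n', (g (-1)).natDegree = n' + 1 := ⟨(g (-1)).natDegree - 1, by omega⟩
        have hp0 : g 1 = C ((g 1).coeff 0) := eq_C_of_natDegree_eq_zero hm0
        rw [hp0, C_comp] at E1
        have hshift := VirAux.shift_coeff (g (-1)) n' (by omega) 1
        have hcoef := congrArg (fun p => Polynomial.coeff p n') E1
        simp only [coeff_sub, coeff_mul_C, coeff_C_mul, hshift, coeff_X] at hcoef
        rw [if_neg (by omega : ¬ (1:ℕ) = n')] at hcoef
        have hz : ((n':ℂ)+1) * (g (-1)).coeff (n'+1) * (g 1).coeff 0 = 0 := by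
          linear_combination -hcoef
        have h1 : ((n':ℂ)+1) ≠ 0 := by
          intro hcon
          have h9 : ((n'+1 : ℕ) : ℂ) ≠ 0 := Nat.cast_ne_zero.2 (by omega)
          exact h9 (by push_cast; linear_combination hcon)
        have h2 : (g (-1)).coeff (n'+1) ≠ 0 := by rw [← hn']; exact hb
        have h3 : (g 1).coeff 0 ≠ 0 := by
          intro hcon
          rw [hcon, map_zero] at hp0
          exact hg1ne hp0
        rcases mul_eq_zero.1 hz with h|h
        · rcases mul_eq_zero.1 h with h|h
          · exact h1 h
          · exact h2 h
        · exact h3 h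
      rcases Nat.eq_zero_or_pos (g (-1)).natDegree with hn0 | hn1
      · -- g (-1) constant, deg g 1 ≥ 3
        obtain ⟨m', hm'⟩ : ∃ m', (g 1).natDegree = m' + 1 := ⟨(g 1).natDegree - 1, by omega⟩
        have hq0 : g (-1) = C ((g (-1)).coeff 0) := eq_C_of_natDegree_eq_zero hn0
        rw [hq0, C_comp] at E1
        have hshift := VirAux.shift_coeff (g 1) m' (by omega) (-1)
        have hcoef := congrArg (fun p => Polynomial.coeff p m') E1
        simp only [coeff_sub, coeff_mul_C, coeff_C_mul, hshift, coeff_X] at hcoef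
        rw [if_neg (by omega : ¬ (1:ℕ) = m')] at hcoef
        have hz : ((m':ℂ)+1) * (g 1).coeff (m'+1) * (g (-1)).coeff 0 = 0 := by
          linear_combination -hcoef
        have h1 : ((m':ℂ)+1) ≠ 0 := by
          intro hcon
          have h9 : ((m'+1 : ℕ) : ℂ) ≠ 0 := Nat.cast_ne_zero.2 (by omega)
          exact h9 (by push_cast; linear_combination hcon)
        have h2 : (g 1).coeff (m'+1) ≠ 0 := by rw [← hm']; exact ha
        have h3 : (g (-1)).coeff 0 ≠ 0 := by
          intro hcon
          rw [hcon, map_zero] at hq0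
          exact hgm1ne hq0
        rcases mul_eq_zero.1 hz with h|h
        · rcases mul_eq_zero.1 h with h|h
          · exact h1 h
          · exact h2 h
        · exact h3 h
      · -- both ≥ 1
        obtain ⟨m', hm'⟩ : ∃ m', (g 1).natDegree = m' + 1 := ⟨(g 1).natDegree - 1, by omega⟩
        obtain ⟨n', hn'⟩ : ∃ n', (g (-1)).natDegree = n' + 1 := ⟨(g (-1)).natDegree - 1, by omega⟩
        have h := VirAux.T1 (g 1) (g (-1)) m' n' 1 (-1) (by omega) (by omega)
        rw [E1] at h
        rw [coeff_C_mul, coeff_X, if_neg (by omega : ¬ (1:ℕ) = n' + m' + 1)] at h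
        have hz : (g 1).coeff (m'+1) * (g (-1)).coeff (n'+1)
            * ((-1)*((m':ℂ)+1) - 1*((n':ℂ)+1)) = 0 := by
          push_cast at h ⊢
          linear_combination -h
        have h2 : (g 1).coeff (m'+1) ≠ 0 := by rw [← hm']; exact ha
        have h3 : (g (-1)).coeff (n'+1) ≠ 0 := by rw [← hn']; exact hb
        have h4 : ((-1)*((m':ℂ)+1) - 1*((n':ℂ)+1)) ≠ 0 := by
          intro hcon
          have h9 : ((m' + n' + 2 : ℕ) : ℂ) ≠ 0 := Nat.cast_ne_zero.2 (by omega)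
          exact h9 (by push_cast; linear_combination -hcon)
        rcases mul_eq_zero.1 hz with h|h
        · rcases mul_eq_zero.1 h with h|h
          · exact h2 h
          · exact h3 h
        · exact h4 h
  -- rule out degenerate degree distributions
  have hdeg : (g 1).natDegree = 1 ∧ (g (-1)).natDegree = 1 := by
    rcases Nat.lt_trichotomy (g 1).natDegree 1 with hm | hm | hm
    · -- deg g 1 = 0, deg g (-1) = 2 : contradiction via E 2 (-1)
      exfalso
      have hm0 : (g 1).natDegree = 0 := by omega
      have hn2 : (g (-1)).natDegree = 2 := by omega
      have Em := E 2 (-1)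
      rw [show (2:ℤ) + (-1) = 1 by norm_num, if_neg (by norm_num : ¬ (1:ℤ) = 0),
        zero_smul, add_zero] at Em
      rw [show ((2:ℤ):ℂ) = 2 by norm_num, show ((-1:ℤ):ℂ) = -1 by norm_num] at Em
      rw [show ((-1:ℂ) - 2) = -3 by norm_num] at Em
      rcases eq_or_ne (g 2) 0 with h2z | h2nz
      · rw [h2z, zero_comp, zero_mul, mul_zero] at Em
        have : (g 1 : Polynomial ℂ) = 0 := by
          rcases smul_eq_zero.1 (show ((-3:ℂ)) • g 1 = 0 by rw [← Em]; ring) with h|h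
          · norm_num at h
          · exact h
        exact hg1ne this
      rcases Nat.eq_zero_or_pos (g 2).natDegree with hd0 | hd1
      · -- g 2 nonzero constant
        have h2f : g 2 = C ((g 2).coeff 0) := eq_C_of_natDegree_eq_zero hd0
        rw [h2f, C_comp] at Em
        have hshift := VirAux.shift_coeff (g (-1)) 1 (by omega) 2
        have hcoef := congrArg (fun p => Polynomial.coeff p 1) Em
        simp only [coeff_sub, coeff_mul_C, coeff_C_mul, coeff_smul, hshift,
          smul_eq_mul] at hcoef
        rw [coeff_eq_zero_of_natDegree_lt (by omega : (g 1).natDegree < 1)] at hcoef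
        have hz : (g (-1)).coeff 2 * (g 2).coeff 0 = 0 := by
          push_cast at hcoef
          linear_combination (-1/4 : ℂ) * hcoef
        have hr : (g 2).coeff 0 ≠ 0 := by
          intro hcon; rw [hcon, map_zero] at h2f; exact h2nz h2f
        have hQ2 : (g (-1)).coeff 2 ≠ 0 := by rw [← hn2]; exact hb
        rcases mul_eq_zero.1 hz with h|h
        · exact hQ2 h
        · exact hr h
      · obtain ⟨d', hd'⟩ : ∃ d', (g 2).natDegree = d' + 1 := ⟨(g 2).natDegree - 1, by omega⟩
        have h := VirAux.T1 (g 2) (g (-1)) d' 1 2 (-1) (by omega) (by omega)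
        rw [Em] at h
        rw [coeff_smul, coeff_eq_zero_of_natDegree_lt
          (by omega : (g 1).natDegree < 1 + d' + 1), smul_zero] at h
        have hP : (g 2).coeff (d'+1) ≠ 0 := by rw [← hd']; exact
          (by rw [coeff_natDegree]; exact leadingCoeff_ne_zero.mpr h2nz)
        have hQ2 : (g (-1)).coeff (1+1) ≠ 0 := by rw [show (1+1) = 2 from rfl, ← hn2]; exact hb
        have h4 : ((-1:ℂ)*((d':ℂ)+1) - 2*((1:ℕ)+1)) ≠ 0 := by
          intro hcon
          have h9 : ((d' + 5 : ℕ) : ℂ) ≠ 0 := Nat.cast_ne_zero.2 (by omega)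
          exact h9 (by push_cast; linear_combination -hcon)
        rcases mul_eq_zero.1 h.symm with h|h
        · rcases mul_eq_zero.1 h with h|h
          · exact hP h
          · exact hQ2 h
        · exact h4 (by push_cast at h ⊢; linear_combination h)
    · exact ⟨hm, by omega⟩
    · -- deg g 1 = 2, deg g (-1) = 0 : contradiction via E (-2) 1
      exfalso
      have hm2 : (g 1).natDegree = 2 := by omega
      have hn0 : (g (-1)).natDegree = 0 := by omega
      have Em := E (-2) 1
      rw [show (-2:ℤ) + 1 = -1 by norm_num, if_neg (by norm_num : ¬ (-1:ℤ) = 0),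
        zero_smul, add_zero] at Em
      rw [show ((-2:ℤ):ℂ) = -2 by norm_num, show ((1:ℤ):ℂ) = 1 by norm_num] at Em
      rw [show ((1:ℂ) - (-2)) = 3 by norm_num] at Em
      rcases eq_or_ne (g (-2)) 0 with h2z | h2nz
      · rw [h2z, zero_comp, zero_mul, mul_zero] at Em
        have : (g (-1) : Polynomial ℂ) = 0 := by
          rcases smul_eq_zero.1 (show ((3:ℂ)) • g (-1) = 0 by rw [← Em]; ring) with h|h
          · norm_num at h
          · exact h
        exact hgm1ne this
      rcases Nat.eq_zero_or_pos (g (-2)).natDegree with hd0 | hd1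
      · have h2f : g (-2) = C ((g (-2)).coeff 0) := eq_C_of_natDegree_eq_zero hd0
        rw [h2f, C_comp] at Em
        have hshift := VirAux.shift_coeff (g 1) 1 (by omega) (-2)
        have hcoef := congrArg (fun p => Polynomial.coeff p 1) Em
        simp only [coeff_sub, coeff_mul_C, coeff_C_mul, coeff_smul, hshift,
          smul_eq_mul] at hcoef
        rw [coeff_eq_zero_of_natDegree_lt (by omega : (g (-1)).natDegree < 1)] at hcoef
        have hz : (g 1).coeff 2 * (g (-2)).coeff 0 = 0 := by
          push_cast at hcoef
          linear_combination (1/4 : ℂ) * hcoef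
        have hr : (g (-2)).coeff 0 ≠ 0 := by
          intro hcon; rw [hcon, map_zero] at h2f; exact h2nz h2f
        have hP2 : (g 1).coeff 2 ≠ 0 := by rw [← hm2]; exact ha
        rcases mul_eq_zero.1 hz with h|h
        · exact hP2 h
        · exact hr h
      · obtain ⟨d', hd'⟩ : ∃ d', (g (-2)).natDegree = d' + 1 :=
          ⟨(g (-2)).natDegree - 1, by omega⟩
        have h := VirAux.T1 (g (-2)) (g 1) d' 1 (-2) 1 (by omega) (by omega)
        rw [Em] at h
        rw [coeff_smul, coeff_eq_zero_of_natDegree_lt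
          (by omega : (g (-1)).natDegree < 1 + d' + 1), smul_zero] at h
        have hP : (g (-2)).coeff (d'+1) ≠ 0 := by rw [← hd']; exact
          (by rw [coeff_natDegree]; exact leadingCoeff_ne_zero.mpr h2nz)
        have hQ2 : (g 1).coeff (1+1) ≠ 0 := by rw [show (1+1) = 2 from rfl, ← hm2]; exact ha
        have h4 : ((1:ℂ)*((d':ℂ)+1) - (-2)*((1:ℕ)+1)) ≠ 0 := by
          intro hcon
          have h9 : ((d' + 5 : ℕ) : ℂ) ≠ 0 := Nat.cast_ne_zero.2 (by omega)
          exact h9 (by push_cast; linear_combination hcon)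
        rcases mul_eq_zero.1 h.symm with h|h
        · rcases mul_eq_zero.1 h with h|h
          · exact hP h
          · exact hQ2 h
        · exact h4 (by push_cast at h ⊢; linear_combination h)
  obtain ⟨hm1, hn1⟩ := hdeg
  -- extract the parameters l (= a) and α
  have hane : (g 1).coeff 1 ≠ 0 := by rw [← hm1]; exact ha
  have hbne : (g (-1)).coeff 1 ≠ 0 := by rw [← hn1]; exact hb
  have hab : (g 1).coeff 1 * (g (-1)).coeff 1 = 1 := by
    have h := VirAux.T1 (g 1) (g (-1)) 0 0 1 (-1) (by omega) (by omega)
    rw [E1] at h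
    rw [coeff_C_mul, coeff_X, if_pos rfl] at h
    push_cast at h
    linear_combination (1/2 : ℂ) * h
  set a : ℂ := (g 1).coeff 1 with hadef
  set α : ℂ := -(g 1).coeff 0 / a with hαdef
  have hg1f : g 1 = C a * (X - C α) := by
    have h := eq_X_add_C_of_natDegree_le_one (le_of_eq hm1)
    have haα : a * α = -(g 1).coeff 0 := by
      rw [hαdef]; field_simp
    rw [mul_sub, ← map_mul, haα, map_neg, sub_neg_eq_add]
    exact h
  have hbinv : (g (-1)).coeff 1 = a⁻¹ := by
    field_simp
    linear_combination hab
  have hq0 : (g (-1)).coeff 0 = α * a⁻¹ := by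
    have hev := congrArg (Polynomial.eval α) E1
    simp only [eval_sub, eval_mul, eval_comp, eval_X, eval_C] at hev
    have e1 : (g 1).eval α = 0 := by rw [hg1f]; simp
    have e2 : (g 1).eval (α - (-1)) = a := by rw [hg1f]; simp
    have e3 : (g (-1)).eval α = (g (-1)).coeff 1 * α + (g (-1)).coeff 0 := by
      conv_lhs => rw [eq_X_add_C_of_natDegree_le_one (le_of_eq hn1)]
      simp
    rw [e1, e2, e3, hbinv, mul_zero, zero_sub] at hev
    field_simp at hev ⊢
    linear_combination -hev
  have hgm1f : g (-1) = C a⁻¹ * (X + C α) := by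
    have h := eq_X_add_C_of_natDegree_le_one (le_of_eq hn1)
    rw [hbinv, hq0] at h
    rw [mul_add, ← map_mul, mul_comm (a⁻¹) α]
    exact h
  have hCab : (C a : Polynomial ℂ) * C a⁻¹ = 1 := by
    rw [← map_mul, mul_inv_cancel₀ hane, map_one]
  -- Phase 3 : determine all the g i by induction
  have key : ∀ i : ℤ, g i = C (a ^ i) * (X - C ((i:ℂ) * α)) := by
    intro i
    induction i using Int.induction_on with
    | zero => rw [hg0]; norm_num
    | succ k ih =>
      have Em := E ((k:ℤ)+1) (-1)
      rw [show (k:ℤ)+1 + (-1) = (k:ℤ) by ring] at Em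
      have hsmul0 : (if (k:ℤ) = 0 then ((((k:ℤ)+1 : ℤ):ℂ)^3 - (((k:ℤ)+1 : ℤ):ℂ))/12
          else 0) • c = 0 := by
        by_cases hk : (k:ℤ) = 0
        · rw [if_pos hk, hk]; norm_num
        · rw [if_neg hk, zero_smul]
      rw [hsmul0, add_zero] at Em
      have ih' : g (k:ℤ) = C (a^(k:ℤ)) * (X - C ((k:ℂ) * α)) := by
        rw [ih]; norm_cast
      rw [show ((((k:ℤ)+1 : ℤ)):ℂ) = (k:ℂ)+1 by push_cast; ring,
          show ((-1:ℤ):ℂ) = -1 by norm_num, ih', hgm1f, smul_eq_C_mul] at Em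
      rw [show (X - C (-1:ℂ)) = X + C 1 by rw [map_neg, sub_neg_eq_add]] at Em
      simp only [mul_comp, add_comp, sub_comp, C_comp, X_comp, one_comp, map_sub, map_add,
        map_neg, map_mul, map_one] at Em
      rw [show ((X : Polynomial ℂ) + 1) = X + C 1 by rw [map_one]] at Em
      have hG : (X + C (α - ((k:ℂ)+1))) * g ((k:ℤ)+1)
          - (X + C α) * ((g ((k:ℤ)+1)).comp (X + C 1))
          = (-2 - C (k:ℂ)) * (C (a^(k:ℤ)) * C a * (X - C (k:ℂ) * C α)) := by
        simp only [map_sub, map_add, map_one]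
        rw [show ((X : Polynomial ℂ) + 1) = X + C 1 by rw [map_one]]
        linear_combination (C a) * Em - ((X + C α - C (k:ℂ) - 1) * g ((k:ℤ)+1)
          - (X + C α) * ((g ((k:ℤ)+1)).comp (X + C 1))) * hCab
      have hP : (X + C (α - ((k:ℂ)+1))) * (C (a^(k:ℤ)) * C a * (X - (C (k:ℂ)+1) * C α))
          - (X + C α) * ((C (a^(k:ℤ)) * C a * (X - (C (k:ℂ)+1) * C α)).comp (X + C 1))
          = (-2 - C (k:ℂ)) * (C (a^(k:ℤ)) * C a * (X - C (k:ℂ) * C α)) := by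
        simp only [mul_comp, sub_comp, add_comp, C_comp, X_comp, one_comp, map_sub,
          map_add, map_one]
        ring
      have hkcond : ∀ j : ℕ, (α - ((k:ℂ)+1)) - α - j * 1 ≠ 0 := by
        intro j hcon
        have h9 : ((k + 1 + j : ℕ) : ℂ) ≠ 0 := Nat.cast_ne_zero.2 (by omega)
        exact h9 (by push_cast; linear_combination -hcon)
      have hfin := VirAux.unique α (α - ((k:ℂ)+1)) 1 one_ne_zero hkcond _ _ _ hG hP
      rw [hfin, ← map_mul, ← zpow_add_one₀ hane]
      push_cast
      simp only [map_mul, map_add, map_one]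
    | pred k ih =>
      have Em := E (-(k:ℤ)-1) 1
      rw [show -(k:ℤ)-1 + 1 = -(k:ℤ) by ring] at Em
      have hsmul0 : (if -(k:ℤ) = 0 then (((-(k:ℤ)-1 : ℤ):ℂ)^3 - ((-(k:ℤ)-1 : ℤ):ℂ))/12
          else 0) • c = 0 := by
        by_cases hk : -(k:ℤ) = 0
        · rw [if_pos hk, show (k:ℤ) = 0 by omega]; norm_num
        · rw [if_neg hk, zero_smul]
      rw [hsmul0, add_zero] at Em
      have ih' : g (-(k:ℤ)) = C (a^(-(k:ℤ))) * (X + C ((k:ℂ) * α)) := by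
        rw [ih, show ((-(k:ℤ) : ℤ):ℂ) = -((k:ℂ)) by push_cast; ring,
          show (-((k:ℂ)))*α = -((k:ℂ)*α) by ring, map_neg, sub_neg_eq_add]
      rw [show ((-(k:ℤ)-1 : ℤ):ℂ) = -(k:ℂ)-1 by push_cast; ring,
          show ((1:ℤ):ℂ) = 1 by norm_num, ih', hg1f, smul_eq_C_mul] at Em
      rw [show (X - C (1:ℂ)) = X + C (-1) by rw [map_neg]; ring] at Em
      simp only [mul_comp, add_comp, sub_comp, C_comp, X_comp, one_comp, map_sub, map_add,
        map_neg, map_mul, map_one] at Em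
      rw [show ((X : Polynomial ℂ) + -1) = X + C (-1) by simp] at Em
      have hCz : C (a^(-(k:ℤ))) = C (a^(-(k:ℤ)-1)) * C a := by
        rw [← map_mul, ← zpow_add_one₀ hane, show (-(k:ℤ)-1+1) = -(k:ℤ) by ring]
      have hG : (X + C (((k:ℂ)+1) - α)) * g (-(k:ℤ)-1)
          - (X + C (-α)) * ((g (-(k:ℤ)-1)).comp (X + C (-1)))
          = (2 + C (k:ℂ)) * (C (a^(-(k:ℤ)-1)) * (X + C (k:ℂ) * C α)) := by
        simp only [map_sub, map_add, map_neg, map_one]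
        rw [show ((X : Polynomial ℂ) + -1) = X + C (-1) by simp]
        linear_combination (C a⁻¹) * Em
          + (-((X + C (k:ℂ) + 1 - C α) * g (-(k:ℤ)-1)
              - (X - C α) * ((g (-(k:ℤ)-1)).comp (X + C (-1))))
             + (2 + C (k:ℂ)) * C (a^(-(k:ℤ)-1)) * (X + C (k:ℂ) * C α)) * hCab
          + (C a⁻¹ * (2 + C (k:ℂ)) * (X + C (k:ℂ) * C α)) * hCz
      have hP : (X + C (((k:ℂ)+1) - α)) * (C (a^(-(k:ℤ)-1)) * (X + (C (k:ℂ)+1) * C α))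
          - (X + C (-α)) * ((C (a^(-(k:ℤ)-1)) * (X + (C (k:ℂ)+1) * C α)).comp (X + C (-1)))
          = (2 + C (k:ℂ)) * (C (a^(-(k:ℤ)-1)) * (X + C (k:ℂ) * C α)) := by
        simp only [mul_comp, sub_comp, add_comp, C_comp, X_comp, one_comp, map_sub,
          map_add, map_neg, map_one]
        ring
      have hkcond : ∀ j : ℕ, (((k:ℂ)+1) - α) - (-α) - j * (-1) ≠ 0 := by
        intro j hcon
        have h9 : ((k + 1 + j : ℕ) : ℂ) ≠ 0 := Nat.cast_ne_zero.2 (by omega)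
        exact h9 (by push_cast; linear_combination hcon)
      have hfin := VirAux.unique (-α) (((k:ℂ)+1) - α) (-1) (by norm_num) hkcond _ _ _ hG hP
      rw [hfin]
      rw [show (-(k:ℕ) - 1 : ℤ) = -(k:ℤ)-1 by push_cast; ring]
      rw [show ((( -(k:ℤ)-1 : ℤ)):ℂ) = -(k:ℂ)-1 by push_cast; ring]
      rw [show (-(k:ℂ)-1)*α = -(((k:ℂ)+1) * α) by ring, map_neg, sub_neg_eq_add]
      simp only [map_mul, map_add, map_one]
  -- the central charge vanishes
  have hc0 : c = 0 := by
    have Em := E 2 (-2)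
    rw [show (2:ℤ) + (-2) = 0 by norm_num, if_pos rfl, hg0] at Em
    have k2 : g 2 = C (a^(2:ℤ)) * (X - C (2*α)) := by
      rw [key 2, show ((2:ℤ):ℂ) = 2 by norm_num]
    have km2 : g (-2) = C (a^(-2:ℤ)) * (X + C (2*α)) := by
      rw [key (-2), show ((-2:ℤ):ℂ) = -2 by norm_num,
        show (-2:ℂ)*α = -(2*α) by ring, map_neg, sub_neg_eq_add]
    rw [k2, km2, show ((2:ℤ):ℂ) = 2 by norm_num, show ((-2:ℤ):ℂ) = -2 by norm_num,
      show ((-2:ℂ) - 2) = -4 by norm_num, show (((2:ℂ))^3 - 2)/12 = 1/2 by norm_num,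
      smul_eq_C_mul, smul_eq_C_mul] at Em
    simp only [mul_comp, add_comp, sub_comp, C_comp, X_comp] at Em
    simp only [map_neg, map_mul, map_ofNat] at Em
    have haz : (C (a^(2:ℤ)) : Polynomial ℂ) * C (a^(-2:ℤ)) = 1 := by
      rw [← map_mul, ← zpow_add₀ hane, show (2:ℤ) + (-2) = 0 by norm_num,
        zpow_zero, map_one]
    have hhalf : C ((1:ℂ)/2) * c = 0 := by
      linear_combination -Em - 4*X*haz
    rcases mul_eq_zero.1 hhalf with h|h
    · exfalso
      rw [Polynomial.C_eq_zero] at h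
      norm_num at h
    · exact h
  have hCop0 : ∀ f : Polynomial ℂ, Cop f = 0 := by
    intro f; rw [hCop, hc0, mul_zero]
  refine ⟨a, α - 1, hane, hCop0, LinearEquiv.refl ℂ (Polynomial ℂ), ?_⟩
  intro i f
  simp only [LinearEquiv.refl_apply]
  rw [hD i f, key i]
  simp only [omegaAct, show α - 1 + 1 = α by ring, smul_eq_C_mul]
  ring
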